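/- Let f(x) = p(x²) + x·q(x²) with p, q real polynomials. Suppose p(−x²) and x·q(−x²) have only simple real roots which interlace, and Re(p(z₀²)/(z₀·q(z₀²))) > 0 for some z₀ with Re z₀ > 0. Then f is stable, i.e., every complex root of f has negative real part. -/

import Mathlib

open Polynomial

/-- `a` and `b` are consecutive roots of `p`. -/
def ConsecRoots (p : Polynomial ℝ) (a b : ℝ) : Prop :=
  p.IsRoot a ∧ p.IsRoot b ∧ a < b ∧ ∀ c : ℝ, a < c → c < b → ¬ p.IsRoot c

/-- The roots of `p` and `q` strictly interlace. -/
def StrictlyInterlace (p q : Polynomial ℝ) : Prop :=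
  (∀ a b : ℝ, ConsecRoots p a b → ∃! c : ℝ, q.IsRoot c ∧ a < c ∧ c < b) ∧
  (∀ a b : ℝ, ConsecRoots q a b → ∃! c : ℝ, p.IsRoot c ∧ a < c ∧ c < b)

namespace Stmt6Aux

lemma aeval_real (p : Polynomial ℝ) (x : ℝ) : Polynomial.aeval (x : ℂ) p = ((p.eval x : ℝ) : ℂ) := by
  have := Polynomial.aeval_algebraMap_apply ℂ x p
  simpa using this

lemma comp_ne_zero {p : Polynomial ℝ} (hp : p ≠ 0) : p.comp (-(X^2)) ≠ 0 := by
  rw [Ne, Polynomial.comp_eq_zero_iff]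
  push_neg
  exact ⟨hp, fun h hc => by simpa using congrArg Polynomial.natDegree hc⟩

lemma sq_ne_nonpos_real {z : ℂ} (hz : 0 < z.re) {x : ℝ} (hx : x ≤ 0) : z^2 ≠ (x : ℂ) := by
  intro h
  have him : (z^2).im = 0 := by rw [h]; simp
  have h2 : 2 * z.re * z.im = 0 := by
    have : (z^2).im = 2 * z.re * z.im := by simp [pow_two, Complex.mul_im]; ring
    linarith [this ▸ him]
  have hzim : z.im = 0 := by
    rcases mul_eq_zero.mp h2 with h' | h'
    · rcases mul_eq_zero.mp h' with h'' | h''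
      · norm_num at h''
      · linarith
    · exact h'
  have hre : (z^2).re = z.re^2 := by simp [pow_two, Complex.mul_re, hzim]
  have : z.re^2 = x := by rw [← hre, h]; simp
  nlinarith

/-- all complex roots of `p` are negative reals -/
lemma roots_neg (p : Polynomial ℝ) (hp00 : p.eval 0 ≠ 0)
    (hreal : ∀ z : ℂ, (Polynomial.aeval (-(z^2)) p = 0) → z.im = 0) :
    ∀ w : ℂ, Polynomial.aeval w p = 0 → ∃ x : ℝ, x < 0 ∧ w = (x : ℂ) := by
  intro w hw
  obtain ⟨z, hz⟩ : ∃ z : ℂ, z^2 = -w := IsAlgClosed.exists_pow_nat_eq (-w) (by norm_num)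
  have hwz : -(z^2) = w := by rw [hz]; ring
  have him : z.im = 0 := hreal z (by rw [hwz]; exact hw)
  have hzre : z = (z.re : ℂ) := Complex.ext rfl (by simp [him])
  have hne : z.re ≠ 0 := by
    intro h0
    have hz0 : z = 0 := by rw [hzre, h0]; simp
    have hw0 : w = 0 := by rw [← hwz, hz0]; simp
    rw [hw0] at hw
    rw [show (0:ℂ) = ((0:ℝ):ℂ) by simp, aeval_real] at hw
    exact hp00 (by exact_mod_cast hw)
  refine ⟨-(z.re^2), by nlinarith [sq_abs z.re, abs_pos.mpr hne, sq_nonneg (|z.re|)], ?_⟩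
  have hwre : w = -((z.re : ℂ))^2 := by rw [← hwz]; exact congrArg (fun t => -t^2) hzre
  rw [hwre]; push_cast; ring

/-- simple roots transfer -/
lemma simple_roots (p R : Polynomial ℝ) (hp : p ≠ 0) (hR : R ≠ 0)
    (hdvd : p.comp (-(X^2)) ∣ R)
    (hneg : ∀ x : ℝ, p.IsRoot x → x < 0)
    (hsimp : ∀ x : ℝ, R.rootMultiplicity x ≤ 1) :
    ∀ x : ℝ, p.rootMultiplicity x ≤ 1 := by
  intro x
  by_contra hmult
  push_neg at hmult
  have h2 : (X - C x)^2 ∣ p := (Polynomial.le_rootMultiplicity_iff hp).mp hmult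
  have hroot : p.IsRoot x := by
    have : 0 < p.rootMultiplicity x := by omega
    exact (Polynomial.rootMultiplicity_pos hp).mp this
  have hx : x < 0 := hneg x hroot
  set c := Real.sqrt (-x) with hc
  have hcsq : c^2 = -x := Real.sq_sqrt (by linarith)
  have hfac : (X - C x).comp (-(X^2)) = -((X - C c) * (X + C c)) := by
    have hCx : (C x : Polynomial ℝ) = -C (c^2) := by rw [hcsq]; simp
    have hCc : (C (c^2) : Polynomial ℝ) = (C c)^2 := by rw [map_pow]
    rw [Polynomial.sub_comp, Polynomial.X_comp, Polynomial.C_comp, hCx, hCc]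
    ring
  have hdvd2 : (X - C c)^2 ∣ p.comp (-(X^2)) := by
    obtain ⟨k, hk⟩ := h2
    have : p.comp (-(X^2)) = ((X - C x).comp (-(X^2)))^2 * k.comp (-(X^2)) := by
      rw [hk]; simp [Polynomial.mul_comp, Polynomial.pow_comp]
    rw [this, hfac]
    exact ⟨(X + C c)^2 * k.comp (-(X^2)), by ring⟩
  have hdvd3 : (X - C c)^2 ∣ R := dvd_trans hdvd2 hdvd
  have : 2 ≤ R.rootMultiplicity c := (Polynomial.le_rootMultiplicity_iff hR).mpr hdvd3
  exact absurd (hsimp c) (by omega)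


lemma no_common_root (P Q : Polynomial ℝ) (hP0 : P ≠ 0) (hQ0 : Q ≠ 0)
    (hint : StrictlyInterlace P Q)
    (hPeven : ∀ t : ℝ, P.eval (-t) = P.eval t)
    (hQodd : ∀ t : ℝ, Q.eval (-t) = - Q.eval t)
    (hP00 : ¬ P.IsRoot 0) :
    ∀ c : ℝ, P.IsRoot c → Q.IsRoot c → False := by
  -- first handle positive c; general case by symmetry
  have key : ∀ c : ℝ, 0 < c → P.IsRoot c → Q.IsRoot c → False := by
    intro c hc hPc hQc
    have hPmc : P.IsRoot (-c) := by
      unfold Polynomial.IsRoot at *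
      rw [hPeven c]; exact hPc
    -- S1 : roots of P below c
    have hfin : {x : ℝ | P.IsRoot x}.Finite := Polynomial.finite_setOf_isRoot hP0
    have hfin1 : {x : ℝ | P.IsRoot x ∧ x < c}.Finite := hfin.subset (fun x hx => hx.1)
    set S1 := hfin1.toFinset with hS1
    have hS1ne : S1.Nonempty := ⟨-c, (Set.Finite.mem_toFinset hfin1).mpr ⟨hPmc, by linarith⟩⟩
    set a' := S1.max' hS1ne with ha'
    have ha'mem : P.IsRoot a' ∧ a' < c :=
      (Set.Finite.mem_toFinset hfin1).mp (S1.max'_mem hS1ne)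
    have hcons : ConsecRoots P a' c := by
      refine ⟨ha'mem.1, hPc, ha'mem.2, fun w hw1 hw2 hPw => ?_⟩
      have : w ∈ S1 := (Set.Finite.mem_toFinset hfin1).mpr ⟨hPw, hw2⟩
      have := S1.le_max' w this
      linarith
    obtain ⟨d, ⟨hdQ, hd1, hd2⟩, -⟩ := hint.1 a' c hcons
    have hfinQ : {x : ℝ | Q.IsRoot x}.Finite := Polynomial.finite_setOf_isRoot hQ0
    have hfin2 : {x : ℝ | Q.IsRoot x ∧ a' < x ∧ x < c}.Finite := hfinQ.subset (fun x hx => hx.1)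
    set S2 := hfin2.toFinset with hS2
    have hS2ne : S2.Nonempty := ⟨d, (Set.Finite.mem_toFinset hfin2).mpr ⟨hdQ, hd1, hd2⟩⟩
    set e := S2.max' hS2ne with he
    have hemem : Q.IsRoot e ∧ a' < e ∧ e < c :=
      (Set.Finite.mem_toFinset hfin2).mp (S2.max'_mem hS2ne)
    have hconsQ : ConsecRoots Q e c := by
      refine ⟨hemem.1, hQc, hemem.2.2, fun w hw1 hw2 hQw => ?_⟩
      have : w ∈ S2 := (Set.Finite.mem_toFinset hfin2).mpr ⟨hQw, lt_trans hemem.2.1 hw1, hw2⟩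
      have := S2.le_max' w this
      linarith
    obtain ⟨a'', ⟨hPa'', ha''1, ha''2⟩, -⟩ := hint.2 e c hconsQ
    have : a'' ∈ S1 := (Set.Finite.mem_toFinset hfin1).mpr ⟨hPa'', ha''2⟩
    have := S1.le_max' a'' this
    linarith [hemem.2.1]
  intro c hPc hQc
  rcases lt_trichotomy c 0 with h | h | h
  · have hP : P.IsRoot (-c) := by unfold Polynomial.IsRoot at *; rw [hPeven]; exact hPc
    have hQ : Q.IsRoot (-c) := by
      unfold Polynomial.IsRoot at *
      rw [hQodd]; rw [hQc]; ring
    exact key (-c) (by linarith) hP hQ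
  · exact hP00 (h ▸ hPc)
  · exact key c h hPc hQc

/-- if `b` is the smallest positive root of `Q`, and `0` is a root of `Q`,
then `P` has a root in `(0,b)`. -/
lemma min_pos_root (P Q : Polynomial ℝ) (hint : StrictlyInterlace P Q)
    (hQzero : Q.IsRoot 0) :
    ∀ b : ℝ, 0 < b → Q.IsRoot b → (∀ w : ℝ, 0 < w → w < b → ¬ Q.IsRoot w) →
    ∃ a : ℝ, P.IsRoot a ∧ 0 < a ∧ a < b := by
  intro b hb hQb hmin
  obtain ⟨a, ⟨hPa, ha1, ha2⟩, -⟩ := hint.2 0 b ⟨hQzero, hQb, hb, hmin⟩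
  exact ⟨a, hPa, ha1, ha2⟩

/-- number of distinct roots equals degree, for a poly with all roots simple negative reals -/
lemma card_roots_toFinset (p : Polynomial ℝ) (hp : p ≠ 0)
    (hnegreal : ∀ w : ℂ, Polynomial.aeval w p = 0 → ∃ x : ℝ, x < 0 ∧ w = (x : ℂ))
    (hsim : ∀ x : ℝ, p.rootMultiplicity x ≤ 1) :
    p.roots.toFinset.card = p.natDegree := by
  classical
  set pm := p.map (algebraMap ℝ ℂ) with hpmdef
  have hpm : pm ≠ 0 := Polynomial.map_ne_zero hp
  have hsplits : pm.roots.card = pm.natDegree :=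
    (Polynomial.splits_iff_card_roots).mp
      (IsAlgClosed.splits pm)
  have hdeg : pm.natDegree = p.natDegree := Polynomial.natDegree_map _
  -- multiplicity transfer
  have hmult : ∀ x : ℝ, pm.rootMultiplicity (x : ℂ) = p.rootMultiplicity x := by
    intro x
    apply le_antisymm
    · by_contra hlt
      push_neg at hlt
      have h2 : (X - C (x:ℂ))^(p.rootMultiplicity x + 1) ∣ pm :=
        (Polynomial.le_rootMultiplicity_iff hpm).mp hlt
      have hmap : ((X - C x)^(p.rootMultiplicity x + 1) : Polynomial ℝ).map (algebraMap ℝ ℂ)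
          = (X - C (x:ℂ))^(p.rootMultiplicity x + 1) := by
        simp [Polynomial.map_pow]
      have : (X - C x)^(p.rootMultiplicity x + 1) ∣ p := by
        rw [← Polynomial.map_dvd_map (algebraMap ℝ ℂ) (algebraMap ℝ ℂ).injective
          (((Polynomial.monic_X_sub_C x).pow _))]
        rw [hmap]; exact h2
      have := (Polynomial.le_rootMultiplicity_iff hp).mpr this
      omega
    · have h2 : (X - C x)^(p.rootMultiplicity x) ∣ p :=
        (Polynomial.le_rootMultiplicity_iff hp).mp le_rfl
      have : (X - C (x:ℂ))^(p.rootMultiplicity x) ∣ pm := by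
        have := _root_.map_dvd (Polynomial.mapRingHom (algebraMap ℝ ℂ)) h2
        simpa [Polynomial.coe_mapRingHom, Polynomial.map_pow] using this
      exact (Polynomial.le_rootMultiplicity_iff hpm).mpr this
  -- pm.roots ≤ image of real roots
  have hle : pm.roots ≤ (p.roots.toFinset.image (fun x : ℝ => (x : ℂ))).val := by
    rw [Multiset.le_iff_count]
    intro ξ
    by_cases hmem : ξ ∈ pm.roots
    · have hξ0 : Polynomial.aeval ξ p = 0 := by
        have hir : pm.IsRoot ξ := (Polynomial.mem_roots hpm).mp hmem
        rw [Polynomial.aeval_def, ← Polynomial.eval_map]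
        exact hir
      obtain ⟨x, hx, hxe⟩ := hnegreal ξ hξ0
      have hxroot : x ∈ p.roots.toFinset := by
        rw [Multiset.mem_toFinset, Polynomial.mem_roots hp]
        have : Polynomial.aeval (x:ℂ) p = 0 := hxe ▸ hξ0
        rw [aeval_real] at this
        exact_mod_cast this
      have hcount1 : (p.roots.toFinset.image (fun x : ℝ => (x : ℂ))).val.count ξ = 1 := by
        apply Multiset.count_eq_one_of_mem (Finset.nodup _)
        rw [Finset.mem_val, Finset.mem_image]
        exact ⟨x, hxroot, hxe.symm⟩
      rw [hcount1, Polynomial.count_roots, hxe, hmult]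
      exact hsim x
    · rw [Multiset.count_eq_zero_of_notMem hmem]
      exact Nat.zero_le _
  have hcard1 : pm.roots.card ≤ p.roots.toFinset.card := by
    calc pm.roots.card ≤ (p.roots.toFinset.image (fun x : ℝ => (x : ℂ))).val.card :=
          Multiset.card_le_card hle
      _ = p.roots.toFinset.card := by
          rw [Finset.card_val]
          exact Finset.card_image_of_injective _ (fun a b h => by exact_mod_cast h)
  have hcard2 : p.roots.toFinset.card ≤ p.natDegree :=
    le_trans (Multiset.toFinset_card_le _) (Polynomial.card_roots' p)
  omega


lemma card_evens : ∀ K : ℕ, ((Finset.range K).filter (fun i => i % 2 = 0)).card = (K+1)/2 := by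
  intro K
  induction K with
  | zero => simp
  | succ k ih =>
    rw [Finset.range_add_one, Finset.filter_insert]
    by_cases h : k % 2 = 0
    · rw [if_pos h, Finset.card_insert_of_notMem (by simp)]
      omega
    · rw [if_neg h]
      omega

set_option maxHeartbeats 2000000 in
/-- All complex roots of `p² + s·X·q²` are negative reals. -/
lemma G_roots_neg (p q : Polynomial ℝ) (s : ℝ) (hs : 0 < s)
    (hp : p ≠ 0) (hq : q ≠ 0)
    (hp00 : p.eval 0 ≠ 0)
    (hnegrealp : ∀ w : ℂ, Polynomial.aeval w p = 0 → ∃ x : ℝ, x < 0 ∧ w = (x:ℂ))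
    (hnegrealq : ∀ w : ℂ, Polynomial.aeval w q = 0 → ∃ x : ℝ, x < 0 ∧ w = (x:ℂ))
    (hUcard : p.roots.toFinset.card = p.natDegree)
    (hVcard : q.roots.toFinset.card = q.natDegree)
    (hint : StrictlyInterlace (p.comp (-(X^2))) (X * q.comp (-(X^2))))
    (hnocommon : ∀ c : ℝ, (p.comp (-(X^2))).IsRoot c → (X * q.comp (-(X^2))).IsRoot c → False) :
    ∀ w : ℂ, Polynomial.aeval w (p^2 + C s * (X * q^2)) = 0 → ∃ x : ℝ, x < 0 ∧ w = (x:ℂ) := by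
  classical
  set P := p.comp (-(X^2)) with hPdef
  set Q := X * q.comp (-(X^2)) with hQdef
  have hPeval : ∀ t : ℝ, P.eval t = p.eval (-(t^2)) := by
    intro t; rw [hPdef]; simp [Polynomial.eval_comp]
  have hQeval : ∀ t : ℝ, Q.eval t = t * q.eval (-(t^2)) := by
    intro t; rw [hQdef]; simp [Polynomial.eval_comp]
  have hnegp : ∀ x : ℝ, p.IsRoot x → x < 0 := by
    intro x hx
    obtain ⟨x', hx', he⟩ := hnegrealp (x:ℂ) (by rw [aeval_real]; exact_mod_cast hx)
    have hxx : x = x' := by exact_mod_cast he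
    rw [hxx]; exact hx'
  have hnegq : ∀ x : ℝ, q.IsRoot x → x < 0 := by
    intro x hx
    obtain ⟨x', hx', he⟩ := hnegrealq (x:ℂ) (by rw [aeval_real]; exact_mod_cast hx)
    have hxx : x = x' := by exact_mod_cast he
    rw [hxx]; exact hx'
  set U := p.roots.toFinset with hUdef
  set V := q.roots.toFinset with hVdef
  set m := p.natDegree with hmdef
  set n := q.natDegree with hndef
  have hUroot : ∀ x ∈ U, p.IsRoot x := by
    intro x hx
    rw [hUdef, Multiset.mem_toFinset, Polynomial.mem_roots hp] at hx
    exact hx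
  have hVroot : ∀ x ∈ V, q.IsRoot x := by
    intro x hx
    rw [hVdef, Multiset.mem_toFinset, Polynomial.mem_roots hq] at hx
    exact hx
  have hUneg : ∀ x ∈ U, x < 0 := fun x hx => hnegp x (hUroot x hx)
  have hVneg : ∀ x ∈ V, x < 0 := fun x hx => hnegq x (hVroot x hx)
  set Ap := U.image (fun x => Real.sqrt (-x)) with hApdef
  set Bp := V.image (fun x => Real.sqrt (-x)) with hBpdef
  have memAp : ∀ c : ℝ, c ∈ Ap ↔ (0 < c ∧ P.IsRoot c) := by
    intro c
    constructor
    · intro hc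
      rw [hApdef, Finset.mem_image] at hc
      obtain ⟨x, hx, hxc⟩ := hc
      have hxneg := hUneg x hx
      have hcpos : 0 < c := by rw [← hxc]; exact Real.sqrt_pos.mpr (by linarith)
      refine ⟨hcpos, ?_⟩
      unfold Polynomial.IsRoot
      rw [hPeval]
      have hcsq : c^2 = -x := by rw [← hxc]; exact Real.sq_sqrt (by linarith)
      rw [hcsq, neg_neg]
      exact hUroot x hx
    · rintro ⟨hcpos, hroot⟩
      rw [hApdef, Finset.mem_image]
      refine ⟨-(c^2), ?_, ?_⟩
      · rw [hUdef, Multiset.mem_toFinset, Polynomial.mem_roots hp]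
        unfold Polynomial.IsRoot at hroot ⊢
        rw [hPeval] at hroot
        exact hroot
      · rw [neg_neg]
        exact Real.sqrt_sq hcpos.le
  have memBp : ∀ c : ℝ, c ∈ Bp ↔ (0 < c ∧ Q.IsRoot c) := by
    intro c
    constructor
    · intro hc
      rw [hBpdef, Finset.mem_image] at hc
      obtain ⟨x, hx, hxc⟩ := hc
      have hxneg := hVneg x hx
      have hcpos : 0 < c := by rw [← hxc]; exact Real.sqrt_pos.mpr (by linarith)
      refine ⟨hcpos, ?_⟩
      unfold Polynomial.IsRoot
      rw [hQeval]
      have hcsq : c^2 = -x := by rw [← hxc]; exact Real.sq_sqrt (by linarith)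
      rw [hcsq, neg_neg]
      rw [show q.eval x = 0 from hVroot x hx]
      ring
    · rintro ⟨hcpos, hroot⟩
      rw [hBpdef, Finset.mem_image]
      unfold Polynomial.IsRoot at hroot
      rw [hQeval] at hroot
      have hqr : q.eval (-(c^2)) = 0 := by
        rcases mul_eq_zero.mp hroot with h | h
        · exact absurd h (ne_of_gt hcpos)
        · exact h
      refine ⟨-(c^2), ?_, ?_⟩
      · rw [hVdef, Multiset.mem_toFinset, Polynomial.mem_roots hq]
        exact hqr
      · rw [neg_neg]
        exact Real.sqrt_sq hcpos.le
  have sqrt_injU : ∀ x1 ∈ U, ∀ x2 ∈ U, Real.sqrt (-x1) = Real.sqrt (-x2) → x1 = x2 := by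
    intro x1 h1 x2 h2 he
    have e1 : Real.sqrt (-x1) ^ 2 = -x1 := Real.sq_sqrt (by linarith [hUneg x1 h1])
    have e2 : Real.sqrt (-x2) ^ 2 = -x2 := Real.sq_sqrt (by linarith [hUneg x2 h2])
    rw [he] at e1
    linarith [e1, e2]
  have sqrt_injV : ∀ x1 ∈ V, ∀ x2 ∈ V, Real.sqrt (-x1) = Real.sqrt (-x2) → x1 = x2 := by
    intro x1 h1 x2 h2 he
    have e1 : Real.sqrt (-x1) ^ 2 = -x1 := Real.sq_sqrt (by linarith [hVneg x1 h1])
    have e2 : Real.sqrt (-x2) ^ 2 = -x2 := Real.sq_sqrt (by linarith [hVneg x2 h2])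
    rw [he] at e1
    linarith [e1, e2]
  have cardAp : Ap.card = m := by
    rw [hApdef, Finset.card_image_of_injOn sqrt_injU]
    exact hUcard
  have cardBp : Bp.card = n := by
    rw [hBpdef, Finset.card_image_of_injOn sqrt_injV]
    exact hVcard
  have hdisjAB : Disjoint Ap Bp := by
    rw [Finset.disjoint_left]
    intro c hcA hcB
    exact hnocommon c ((memAp c).mp hcA).2 ((memBp c).mp hcB).2
  set W := Ap ∪ Bp with hWdef
  set K := W.card with hKdef
  have hK : K = m + n := by
    rw [hKdef, hWdef, Finset.card_union_of_disjoint hdisjAB, cardAp, cardBp]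
  have hWpos : ∀ w ∈ W, 0 < w := by
    intro w hw
    rw [hWdef, Finset.mem_union] at hw
    rcases hw with h | h
    · exact ((memAp w).mp h).1
    · exact ((memBp w).mp h).1
  set l := W.sort (· ≤ ·) with hldef
  have hlen : l.length = K := Finset.length_sort _
  have hsorted : List.Pairwise (· < ·) l := (Finset.sortedLT_sort W).pairwise
  have hget : ∀ i (h : i < l.length), l.getD i 0 = l.get ⟨i, h⟩ :=
    fun i h => List.getD_eq_get l 0 ⟨i, h⟩
  have hmem_l : ∀ i (h : i < l.length), l.getD i 0 ∈ W := by
    intro i h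
    rw [hget i h]
    exact (Finset.mem_sort _).mp (List.get_mem l ⟨i, h⟩)
  have hstrict : ∀ i j (hi : i < l.length) (hj : j < l.length), i < j →
      l.getD i 0 < l.getD j 0 := by
    intro i j hi hj hij
    rw [hget i hi, hget j hj]
    exact hsorted.sortedLT.strictMono_get (by exact hij)
  have hWmem_iff : ∀ w : ℝ, w ∈ W ↔ ∃ j, ∃ h : j < l.length, l.getD j 0 = w := by
    intro w
    rw [show (w ∈ W) ↔ w ∈ l from (Finset.mem_sort _).symm, List.mem_iff_get]
    constructor
    · rintro ⟨⟨j, hj⟩, he⟩; exact ⟨j, hj, by rw [hget j hj]; exact he⟩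
    · rintro ⟨j, hj, he⟩; exact ⟨⟨j, hj⟩, by rw [← hget j hj]; exact he⟩
  have hadj : ∀ i (h : i + 1 < l.length), ∀ w ∈ W,
      ¬(l.getD i 0 < w ∧ w < l.getD (i+1) 0) := by
    rintro i h w hw ⟨h1, h2⟩
    obtain ⟨j, hj, hje⟩ := (hWmem_iff w).mp hw
    rw [← hje] at h1 h2
    have hij : i < j := by
      by_contra hc
      push_neg at hc
      rcases Nat.eq_or_lt_of_le hc with hc' | hc'
      · rw [hc'] at h1; exact lt_irrefl _ h1
      · exact absurd h1 (not_lt.mpr (hstrict j i hj (by omega) hc').le)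
    have hji : j < i + 1 := by
      by_contra hc
      push_neg at hc
      rcases Nat.eq_or_lt_of_le hc with hc' | hc'
      · rw [← hc'] at h2; exact lt_irrefl _ h2
      · exact absurd h2 (not_lt.mpr (hstrict (i+1) j h hj hc').le)
    omega
  have hQzero : Q.IsRoot 0 := by
    unfold Polynomial.IsRoot
    rw [hQeval]; ring
  -- parity of memberships along the sorted list
  have hpar : ∀ i (h : i < l.length), (l.getD i 0 ∈ Ap ↔ i % 2 = 0) := by
    intro i
    induction i with
    | zero =>
      intro h
      refine iff_of_true ?_ rfl
      by_contra hnot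
      have hB : l.getD 0 0 ∈ Bp := by
        have := hmem_l 0 h
        rw [hWdef, Finset.mem_union] at this
        tauto
      obtain ⟨hbpos, hbroot⟩ := (memBp _).mp hB
      have hminQ : ∀ w : ℝ, 0 < w → w < l.getD 0 0 → ¬ Q.IsRoot w := by
        intro w hw1 hw2 hQw
        have hwB : w ∈ Bp := (memBp w).mpr ⟨hw1, hQw⟩
        have hwW : w ∈ W := by rw [hWdef, Finset.mem_union]; right; exact hwB
        obtain ⟨j, hj, hje⟩ := (hWmem_iff w).mp hwW
        have : l.getD 0 0 ≤ l.getD j 0 := by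
          rcases Nat.eq_zero_or_pos j with h0 | h0
          · rw [h0]
          · exact (hstrict 0 j h hj h0).le
        rw [hje] at this
        linarith
      obtain ⟨a, haP, ha1, ha2⟩ :=
        min_pos_root P Q hint hQzero (l.getD 0 0) hbpos hbroot hminQ
      have haA : a ∈ Ap := (memAp a).mpr ⟨ha1, haP⟩
      have haW : a ∈ W := by rw [hWdef, Finset.mem_union]; left; exact haA
      obtain ⟨j, hj, hje⟩ := (hWmem_iff a).mp haW
      have : l.getD 0 0 ≤ l.getD j 0 := by
        rcases Nat.eq_zero_or_pos j with h0 | h0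
        · rw [h0]
        · exact (hstrict 0 j h hj h0).le
      rw [hje] at this
      linarith
    | succ i ih =>
      intro h
      have hi : i < l.length := by omega
      have ihi := ih hi
      set u := l.getD i 0 with hu
      set v := l.getD (i+1) 0 with hv
      have huv : u < v := hstrict i (i+1) hi h (by omega)
      have humem : u ∈ W := hmem_l i hi
      have hvmem : v ∈ W := hmem_l (i+1) h
      have flip1 : u ∈ Ap → v ∈ Bp := by
        intro huA
        by_contra hnot
        have hvA : v ∈ Ap := by
          rw [hWdef, Finset.mem_union] at hvmem; tauto
        have hcons : ConsecRoots P u v := by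
          refine ⟨((memAp u).mp huA).2, ((memAp v).mp hvA).2, huv, ?_⟩
          intro w hw1 hw2 hPw
          have hwpos : 0 < w := lt_trans ((memAp u).mp huA).1 hw1
          have hwW : w ∈ W := by
            rw [hWdef, Finset.mem_union]; left; exact (memAp w).mpr ⟨hwpos, hPw⟩
          exact hadj i h w hwW ⟨hw1, hw2⟩
        obtain ⟨b, ⟨hbQ, hb1, hb2⟩, -⟩ := hint.1 u v hcons
        have hbpos : 0 < b := lt_trans ((memAp u).mp huA).1 hb1
        have hbW : b ∈ W := by
          rw [hWdef, Finset.mem_union]; right; exact (memBp b).mpr ⟨hbpos, hbQ⟩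
        exact hadj i h b hbW ⟨hb1, hb2⟩
      have flip2 : u ∈ Bp → v ∈ Ap := by
        intro huB
        by_contra hnot
        have hvB : v ∈ Bp := by
          rw [hWdef, Finset.mem_union] at hvmem; tauto
        have hcons : ConsecRoots Q u v := by
          refine ⟨((memBp u).mp huB).2, ((memBp v).mp hvB).2, huv, ?_⟩
          intro w hw1 hw2 hQw
          have hwpos : 0 < w := lt_trans ((memBp u).mp huB).1 hw1
          have hwW : w ∈ W := by
            rw [hWdef, Finset.mem_union]; right; exact (memBp w).mpr ⟨hwpos, hQw⟩
          exact hadj i h w hwW ⟨hw1, hw2⟩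
        obtain ⟨b, ⟨hbP, hb1, hb2⟩, -⟩ := hint.2 u v hcons
        have hbpos : 0 < b := lt_trans ((memBp u).mp huB).1 hb1
        have hbW : b ∈ W := by
          rw [hWdef, Finset.mem_union]; left; exact (memAp b).mpr ⟨hbpos, hbP⟩
        exact hadj i h b hbW ⟨hb1, hb2⟩
      by_cases huA : u ∈ Ap
      · have : i % 2 = 0 := ihi.mp huA
        have hvB : v ∈ Bp := flip1 huA
        have hvnA : v ∉ Ap := Finset.disjoint_left.mp hdisjAB.symm hvB
        constructor
        · intro hc; exact absurd hc hvnA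
        · intro hc; omega
      · have hio : ¬(i % 2 = 0) := fun hc => huA (ihi.mpr hc)
        have huB : u ∈ Bp := by
          rw [hWdef, Finset.mem_union] at humem; tauto
        have hvA : v ∈ Ap := flip2 huB
        constructor
        · intro _; omega
        · intro _; exact hvA
  -- cardinalities from parity
  have hApchar : Ap = ((Finset.range K).filter (fun i => i % 2 = 0)).image
      (fun i => l.getD i 0) := by
    ext a
    constructor
    · intro ha
      have haW : a ∈ W := by rw [hWdef, Finset.mem_union]; left; exact ha
      obtain ⟨j, hj, hje⟩ := (hWmem_iff a).mp haW
      have : j % 2 = 0 := (hpar j hj).mp (by rw [hje]; exact ha)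
      rw [Finset.mem_image]
      exact ⟨j, by rw [Finset.mem_filter, Finset.mem_range]; exact ⟨by omega, this⟩, hje⟩
    · intro ha
      rw [Finset.mem_image] at ha
      obtain ⟨i, hi, hie⟩ := ha
      rw [Finset.mem_filter, Finset.mem_range] at hi
      have hil : i < l.length := by omega
      rw [← hie]
      exact (hpar i hil).mpr hi.2
  have hmK : m = (K+1)/2 := by
    rw [← cardAp, hApchar, Finset.card_image_of_injOn, card_evens]
    intro i hi j hj hij
    rw [Finset.mem_coe, Finset.mem_filter, Finset.mem_range] at hi hj
    by_contra hne
    rcases lt_trichotomy i j with h | h | h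
    · exact absurd hij (ne_of_lt (hstrict i j (by omega) (by omega) h))
    · exact hne h
    · exact absurd hij.symm (ne_of_lt (hstrict j i (by omega) (by omega) h))
  have hmn : m = n ∨ m = n + 1 := by omega
  -- the polynomial G
  set G := p^2 + C s * (X * q^2) with hGdef
  have hp2ne : p^2 ≠ 0 := pow_ne_zero _ hp
  have hT0 : C s * (X * q^2) ≠ 0 :=
    mul_ne_zero (Polynomial.C_ne_zero.mpr (ne_of_gt hs)) (mul_ne_zero Polynomial.X_ne_zero (pow_ne_zero _ hq))
  have hdegp2 : (p^2).natDegree = 2*m := by rw [Polynomial.natDegree_pow]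
  have hdegT : (C s * (X * q^2)).natDegree = 2*n+1 := by
    rw [Polynomial.natDegree_C_mul (ne_of_gt hs),
      Polynomial.natDegree_mul Polynomial.X_ne_zero (pow_ne_zero _ hq),
      Polynomial.natDegree_X, Polynomial.natDegree_pow]
    omega
  have hlcp2 : 0 < (p^2).leadingCoeff := by
    rw [Polynomial.leadingCoeff_pow]
    have h := Polynomial.leadingCoeff_ne_zero.mpr hp
    exact lt_of_le_of_ne (sq_nonneg _) (Ne.symm (pow_ne_zero 2 h))
  have hlcT : 0 < (C s * (X * q^2)).leadingCoeff := by
    rw [Polynomial.leadingCoeff_mul, Polynomial.leadingCoeff_mul,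
      Polynomial.leadingCoeff_C, Polynomial.leadingCoeff_X, Polynomial.leadingCoeff_pow]
    have h := Polynomial.leadingCoeff_ne_zero.mpr hq
    have : 0 < q.leadingCoeff^2 := lt_of_le_of_ne (sq_nonneg _) (Ne.symm (pow_ne_zero 2 h))
    nlinarith
  have hGDlc : G.natDegree = K + 1 ∧ 0 < G.leadingCoeff := by
    rcases hmn with hc | hc
    · -- m = n : degree from the X q² term
      have hlt : (p^2).natDegree < (C s * (X * q^2)).natDegree := by omega
      constructor
      · rw [hGdef, Polynomial.natDegree_add_eq_right_of_natDegree_lt hlt, hdegT]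
        omega
      · rw [hGdef, Polynomial.leadingCoeff_add_of_degree_lt]
        · exact hlcT
        · rw [Polynomial.degree_eq_natDegree hp2ne, Polynomial.degree_eq_natDegree hT0]
          exact_mod_cast hlt
    · -- m = n + 1 : degree from p²
      have hlt : (C s * (X * q^2)).natDegree < (p^2).natDegree := by omega
      constructor
      · rw [hGdef, Polynomial.natDegree_add_eq_left_of_natDegree_lt hlt, hdegp2]
        omega
      · have hcomm : G = C s * (X * q^2) + p^2 := by rw [hGdef]; ring
        rw [hcomm, Polynomial.leadingCoeff_add_of_degree_lt]
        · exact hlcp2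
        · rw [Polynomial.degree_eq_natDegree hp2ne, Polynomial.degree_eq_natDegree hT0]
          exact_mod_cast hlt
  have hGdeg : G.natDegree = K + 1 := hGDlc.1
  have hGlc : 0 < G.leadingCoeff := hGDlc.2
  have hG0 : G ≠ 0 := fun h => by rw [h] at hGdeg; simp at hGdeg
  -- the real function g
  set g : ℝ → ℝ := fun u => G.eval (-(u^2)) with hgdef
  have hgcont : Continuous g := by
    have h1 : Continuous (fun x : ℝ => G.eval x) := Polynomial.continuous G
    have h2 : Continuous (fun u : ℝ => -(u^2)) := (continuous_pow 2).neg
    exact h1.comp h2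
  have heval_g : ∀ u : ℝ, g u = (p.eval (-(u^2)))^2 + s * ((-(u^2)) * (q.eval (-(u^2)))^2) := by
    intro u
    rw [hgdef]
    simp [hGdef, Polynomial.eval_add, Polynomial.eval_mul, Polynomial.eval_pow]
  have sign0 : 0 < g 0 := by
    have h0 : g 0 = (p.eval 0)^2 := by rw [heval_g]; norm_num
    rw [h0]
    exact lt_of_le_of_ne (sq_nonneg _) (Ne.symm (pow_ne_zero 2 hp00))
  have signA : ∀ c ∈ Ap, g c < 0 := by
    intro c hc
    obtain ⟨hcpos, hroot⟩ := (memAp c).mp hc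
    unfold Polynomial.IsRoot at hroot
    rw [hPeval] at hroot
    have hqne : q.eval (-(c^2)) ≠ 0 := by
      intro hqc
      apply hnocommon c
      · unfold Polynomial.IsRoot; rw [hPeval]; exact hroot
      · unfold Polynomial.IsRoot; rw [hQeval, hqc]; ring
    rw [heval_g, hroot]
    have h1 : 0 < (q.eval (-(c^2)))^2 := lt_of_le_of_ne (sq_nonneg _) (Ne.symm (pow_ne_zero 2 hqne))
    have h2 : 0 < c^2 := lt_of_le_of_ne (sq_nonneg _) (Ne.symm (pow_ne_zero 2 (ne_of_gt hcpos)))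
    nlinarith [mul_pos hs (mul_pos h2 h1)]
  have signB : ∀ c ∈ Bp, 0 < g c := by
    intro c hc
    obtain ⟨hcpos, hroot⟩ := (memBp c).mp hc
    unfold Polynomial.IsRoot at hroot
    rw [hQeval] at hroot
    have hqc : q.eval (-(c^2)) = 0 := by
      rcases mul_eq_zero.mp hroot with h | h
      · exact absurd h (ne_of_gt hcpos)
      · exact h
    have hpne : p.eval (-(c^2)) ≠ 0 := by
      intro hpc
      apply hnocommon c
      · unfold Polynomial.IsRoot; rw [hPeval]; exact hpc
      · unfold Polynomial.IsRoot; rw [hQeval, hqc]; ring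
    rw [heval_g, hqc]
    have h1 : 0 < (p.eval (-(c^2)))^2 := lt_of_le_of_ne (sq_nonneg _) (Ne.symm (pow_ne_zero 2 hpne))
    nlinarith
  -- tail behaviour
  have htail : ∃ y : ℝ, (∀ w ∈ W, w < y) ∧ 0 < y ∧
      ((K % 2 = 0 → g y < 0) ∧ (K % 2 = 1 → 0 < g y)) := by
    set Ghat := G.comp (-(X^2)) with hGhatdef
    have hGhat_eval : ∀ u : ℝ, Ghat.eval u = g u := by
      intro u
      rw [hGhatdef, Polynomial.eval_comp]
      simp [hgdef]
    have hGhat_lc : Ghat.leadingCoeff = G.leadingCoeff * (-1)^(K+1) := by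
      rw [hGhatdef, Polynomial.leadingCoeff_comp (by simp)]
      congr 1
      · rw [show (-(X^2) : Polynomial ℝ).leadingCoeff = -1 by simp, hGdeg]
    have hGhat_degpos : 0 < Ghat.degree := by
      rw [Polynomial.natDegree_pos_iff_degree_pos.symm, hGhatdef, Polynomial.natDegree_comp]
      simp [hGdeg]
    have hbnd : ∀ᶠ u in Filter.atTop, (∀ w ∈ W, w < u) ∧ 0 < u := by
      have hMne : (0:ℝ) ∈ insert (0:ℝ) W := Finset.mem_insert_self 0 W
      set M := (insert (0:ℝ) W).max' ⟨0, hMne⟩ with hM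
      have hM0 : 0 ≤ M := Finset.le_max' _ 0 hMne
      have hMw : ∀ w ∈ W, w ≤ M := fun w hw => Finset.le_max' _ w (Finset.mem_insert_of_mem hw)
      filter_upwards [Filter.eventually_gt_atTop M] with u hu
      exact ⟨fun w hw => lt_of_le_of_lt (hMw w hw) hu, lt_of_le_of_lt hM0 hu⟩
    by_cases hKpar : K % 2 = 0
    · have hlcneg : Ghat.leadingCoeff ≤ 0 := by
        rw [hGhat_lc]
        have : (-1:ℝ)^(K+1) = -1 := by
          rw [show K + 1 = 2*(K/2)+1 by omega, pow_succ, pow_mul]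
          norm_num
        rw [this]
        nlinarith
      have htend := Polynomial.tendsto_atBot_of_leadingCoeff_nonpos Ghat hGhat_degpos hlcneg
      have hev : ∀ᶠ u in Filter.atTop, Ghat.eval u < 0 :=
        htend.eventually (Filter.eventually_lt_atBot 0)
      obtain ⟨y, hy1, hy2⟩ := (hev.and hbnd).exists
      refine ⟨y, hy2.1, hy2.2, fun _ => ?_, fun hc => absurd hc (by omega)⟩
      rw [← hGhat_eval]; exact hy1
    · have hlcpos : 0 ≤ Ghat.leadingCoeff := by
        rw [hGhat_lc]
        have : (-1:ℝ)^(K+1) = 1 := by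
          rw [show K + 1 = 2*((K+1)/2) by omega, pow_mul]
          norm_num
        rw [this]
        nlinarith
      have htend := Polynomial.tendsto_atTop_of_leadingCoeff_nonneg Ghat hGhat_degpos hlcpos
      have hev : ∀ᶠ u in Filter.atTop, 0 < Ghat.eval u :=
        htend.eventually (Filter.eventually_gt_atTop 0)
      obtain ⟨y, hy1, hy2⟩ := (hev.and hbnd).exists
      refine ⟨y, hy2.1, hy2.2, fun hc => absurd hc (by omega), fun _ => ?_⟩
      rw [← hGhat_eval]; exact hy1
  obtain ⟨y, hyW, hypos, hysign⟩ := htail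
  -- the chain
  set e : ℕ → ℝ := fun i => if i = 0 then 0 else if i ≤ K then l.getD (i-1) 0 else y
    with hedef
  have he0 : e 0 = 0 := by simp [hedef]
  have heK1 : e (K+1) = y := by
    simp only [hedef]
    rw [if_neg (by omega), if_neg (by omega)]
  have hemid : ∀ i, 1 ≤ i → i ≤ K → e i = l.getD (i-1) 0 := by
    intro i h1 h2
    simp only [hedef]
    rw [if_neg (by omega), if_pos h2]
  have hepos : ∀ i, 1 ≤ i → i ≤ K+1 → 0 < e i := by
    intro i h1 h2
    rcases Nat.lt_or_ge i (K+1) with h | h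
    · rw [hemid i h1 (by omega)]
      exact hWpos _ (hmem_l (i-1) (by omega))
    · have : i = K+1 := by omega
      rw [this, heK1]
      exact hypos
  have hemono : ∀ i, i ≤ K → e i < e (i+1) := by
    intro i hi
    rcases Nat.eq_zero_or_pos i with h0 | h0
    · rw [h0, he0]
      exact hepos 1 le_rfl (by omega)
    · rcases Nat.lt_or_ge (i+1) (K+1) with h | h
      · rw [hemid i h0 hi, hemid (i+1) (by omega) (by omega)]
        have : i - 1 < i := by omega
        exact hstrict (i-1) ((i+1)-1) (by omega) (by omega) (by omega)
      · have hiK : i = K := by omega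
        rw [hiK, heK1, hemid K (by omega) le_rfl]
        exact hyW _ (hmem_l (K-1) (by omega))
  have hemonole : ∀ j, j ≤ K+1 → ∀ i, i ≤ j → e i ≤ e j := by
    intro j
    induction j with
    | zero => intro _ i hi; rw [Nat.le_zero.mp hi]
    | succ k ih =>
      intro hk i hi
      rcases Nat.eq_or_lt_of_le hi with h | h
      · rw [h]
      · exact le_trans (ih (by omega) i (by omega)) (le_of_lt (hemono k (by omega)))
  have hesign : ∀ i, i ≤ K+1 → (i % 2 = 0 → 0 < g (e i)) ∧ (i % 2 = 1 → g (e i) < 0) := by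
    intro i hi
    rcases Nat.eq_zero_or_pos i with h0 | h0
    · rw [h0, he0]
      exact ⟨fun _ => sign0, fun hc => by omega⟩
    · rcases Nat.lt_or_ge i (K+1) with h | h
      · rw [hemid i h0 (by omega)]
        have hil : i - 1 < l.length := by omega
        by_cases hA : l.getD (i-1) 0 ∈ Ap
        · have hpar1 : (i-1) % 2 = 0 := (hpar (i-1) hil).mp hA
          refine ⟨fun hc => by omega, fun _ => signA _ hA⟩
        · have hB : l.getD (i-1) 0 ∈ Bp := by
            have := hmem_l (i-1) hil
            rw [hWdef, Finset.mem_union] at this; tauto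
          have hpar1 : ¬((i-1) % 2 = 0) := fun hc => hA ((hpar (i-1) hil).mpr hc)
          refine ⟨fun _ => signB _ hB, fun hc => by omega⟩
      · have hieq : i = K+1 := by omega
        rw [hieq, heK1]
        constructor
        · intro hc
          exact hysign.2 (by omega)
        · intro hc
          exact hysign.1 (by omega)
  -- roots via IVT
  have hroot : ∀ i, i ≤ K → ∃ r : ℝ, g r = 0 ∧ e i < r ∧ r < e (i+1) := by
    intro i hi
    have hle : e i ≤ e (i+1) := (hemono i hi).le
    have hconton : ContinuousOn g (Set.Icc (e i) (e (i+1))) := hgcont.continuousOn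
    by_cases hip : i % 2 = 0
    · have h1 : 0 < g (e i) := (hesign i (by omega)).1 hip
      have h2 : g (e (i+1)) < 0 := (hesign (i+1) (by omega)).2 (by omega)
      have h0 : (0:ℝ) ∈ Set.Ioo (g (e (i+1))) (g (e i)) := ⟨h2, h1⟩
      obtain ⟨r, hr1, hr2⟩ := intermediate_value_Ioo' hle hconton h0
      exact ⟨r, hr2, hr1.1, hr1.2⟩
    · have h1 : g (e i) < 0 := (hesign i (by omega)).2 (by omega)
      have h2 : 0 < g (e (i+1)) := (hesign (i+1) (by omega)).1 (by omega)
      have h0 : (0:ℝ) ∈ Set.Ioo (g (e i)) (g (e (i+1))) := ⟨h1, h2⟩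
      obtain ⟨r, hr1, hr2⟩ := intermediate_value_Ioo hle hconton h0
      exact ⟨r, hr2, hr1.1, hr1.2⟩
  set r : ℕ → ℝ := fun i => if h : i ≤ K then Classical.choose (hroot i h) else 0 with hrdef
  have hr : ∀ i (h : i ≤ K), g (r i) = 0 ∧ e i < r i ∧ r i < e (i+1) := by
    intro i h
    rw [hrdef]
    simp only [dif_pos h]
    exact Classical.choose_spec (hroot i h)
  have hrpos : ∀ i, i ≤ K → 0 < r i := by
    intro i h
    have h1 : (0:ℝ) ≤ e i := by
      have := hemonole i (by omega) 0 (by omega)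
      rw [he0] at this
      exact this
    linarith [(hr i h).2.1]
  have hrmono : ∀ i j, i < j → j ≤ K → r i < r j := by
    intro i j hij hj
    have h1 : r i < e (i+1) := (hr i (by omega)).2.2
    have h2 : e (i+1) ≤ e j := hemonole j (by omega) (i+1) (by omega)
    have h3 : e j < r j := (hr j hj).2.1
    linarith
  -- pass to ℂ and count roots
  set Gm := G.map (algebraMap ℝ ℂ) with hGmdef
  have hGm0 : Gm ≠ 0 := Polynomial.map_ne_zero hG0
  have hGmdeg : Gm.natDegree = K + 1 := by
    rw [hGmdef, Polynomial.natDegree_map, hGdeg]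
  set Rset : Finset ℂ :=
    (Finset.range (K+1)).image (fun i => (((-((r i)^2)) : ℝ) : ℂ)) with hRsetdef
  have hRcard : Rset.card = K+1 := by
    rw [hRsetdef, Finset.card_image_of_injOn, Finset.card_range]
    intro i hi j hj hij
    rw [Finset.mem_coe, Finset.mem_range] at hi hj
    have : -((r i)^2) = -((r j)^2) := by
      have h' : ((-((r i)^2) : ℝ) : ℂ) = ((-((r j)^2) : ℝ) : ℂ) := hij
      exact_mod_cast h' 
    have hsq : (r i)^2 = (r j)^2 := by linarith
    by_contra hne
    rcases lt_trichotomy i j with h | h | h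
    · have := hrmono i j h (by omega)
      have hpi := hrpos i (by omega)
      nlinarith
    · exact hne h
    · have := hrmono j i h (by omega)
      have hpj := hrpos j (by omega)
      nlinarith
  have hsub : Rset ⊆ Gm.roots.toFinset := by
    intro ξ hξ
    rw [hRsetdef, Finset.mem_image] at hξ
    obtain ⟨i, hi, hie⟩ := hξ
    rw [Finset.mem_range] at hi
    rw [Multiset.mem_toFinset, Polynomial.mem_roots hGm0]
    unfold Polynomial.IsRoot
    rw [← hie]
    rw [hGmdef, Polynomial.eval_map, ← Polynomial.aeval_def, aeval_real]
    have hgr : g (r i) = 0 := (hr i (by omega)).1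
    rw [hgdef] at hgr
    simp only at hgr
    rw [show -(r i)^2 = -((r i)^2) by ring] at hgr ⊢
    rw [hgr]
    simp
  intro w hw
  have hwroot : w ∈ Gm.roots.toFinset := by
    rw [Multiset.mem_toFinset, Polynomial.mem_roots hGm0]
    unfold Polynomial.IsRoot
    rw [hGmdef, Polynomial.eval_map]
    rw [Polynomial.aeval_def] at hw
    exact hw
  have hwin : w ∈ Rset := by
    by_contra hnot
    have hins : insert w Rset ⊆ Gm.roots.toFinset := by
      intro ξ hξ
      rcases Finset.mem_insert.mp hξ with h | h
      · rw [h]; exact hwroot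
      · exact hsub h
    have hc1 : (insert w Rset).card = K + 2 := by
      rw [Finset.card_insert_of_notMem hnot, hRcard]
    have hc2 : (insert w Rset).card ≤ Gm.roots.toFinset.card := Finset.card_le_card hins
    have hc3 : Gm.roots.toFinset.card ≤ Multiset.card Gm.roots := Multiset.toFinset_card_le _
    have hc4 : Multiset.card Gm.roots ≤ Gm.natDegree := Polynomial.card_roots' Gm
    omega
  rw [hRsetdef, Finset.mem_image] at hwin
  obtain ⟨i, hi, hie⟩ := hwin
  rw [Finset.mem_range] at hi
  refine ⟨-((r i)^2), ?_, hie.symm⟩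
  have := hrpos i (by omega)
  nlinarith

end Stmt6Aux

set_option maxHeartbeats 2000000 in
theorem stmt6 (f p q : Polynomial ℝ)
    (hdec : f = p.comp (Polynomial.X ^ 2) + Polynomial.X * q.comp (Polynomial.X ^ 2))
    (hrealP : ∀ z : ℂ, Polynomial.aeval z (p.comp (-(Polynomial.X ^ 2))) = 0 → z.im = 0)
    (hrealQ : ∀ z : ℂ, Polynomial.aeval z (Polynomial.X * q.comp (-(Polynomial.X ^ 2))) = 0 → z.im = 0)
    (hsimpP : ∀ x : ℝ, (p.comp (-(Polynomial.X ^ 2))).rootMultiplicity x ≤ 1)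
    (hsimpQ : ∀ x : ℝ, (Polynomial.X * q.comp (-(Polynomial.X ^ 2))).rootMultiplicity x ≤ 1)
    (hint : StrictlyInterlace (p.comp (-(Polynomial.X ^ 2)))
      (Polynomial.X * q.comp (-(Polynomial.X ^ 2))))
    (hpos : ∃ z₀ : ℂ, 0 < z₀.re ∧
      0 < (Polynomial.aeval (z₀ ^ 2) p / (z₀ * Polynomial.aeval (z₀ ^ 2) q)).re) :
    ∀ z : ℂ, Polynomial.aeval z f = 0 → z.re < 0 := by
  classical
  intro z hz
  obtain ⟨z₀, hz₀re, hz₀pos⟩ := hpos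
  have hq : q ≠ 0 := by
    intro h0
    rw [h0] at hz₀pos
    simp at hz₀pos
  have hp : p ≠ 0 := by
    intro h0
    rw [h0] at hz₀pos
    simp at hz₀pos
  have hP0 : p.comp (-(X^2)) ≠ 0 := Stmt6Aux.comp_ne_zero hp
  have hQcomp0 : q.comp (-(X^2)) ≠ 0 := Stmt6Aux.comp_ne_zero hq
  have hQ0 : X * q.comp (-(X^2)) ≠ 0 := mul_ne_zero Polynomial.X_ne_zero hQcomp0
  have hPeval : ∀ t : ℝ, (p.comp (-(X^2))).eval t = p.eval (-(t^2)) := by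
    intro t; simp [Polynomial.eval_comp]
  have hQeval : ∀ t : ℝ, (X * q.comp (-(X^2))).eval t = t * q.eval (-(t^2)) := by
    intro t; simp [Polynomial.eval_comp]
  have hp00 : p.eval 0 ≠ 0 := by
    intro h0
    obtain ⟨k, hk⟩ := Polynomial.dvd_iff_isRoot.mpr (show p.IsRoot 0 from h0)
    have h2 : (X - C (0:ℝ))^2 ∣ p.comp (-(X^2)) := by
      rw [hk, Polynomial.mul_comp, Polynomial.sub_comp, Polynomial.X_comp, Polynomial.C_comp, Polynomial.C_0]
      exact ⟨-(k.comp (-(X^2))), by ring⟩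
    have hm := (Polynomial.le_rootMultiplicity_iff hP0).mpr h2
    have := hsimpP 0
    omega
  have hq00 : q.eval 0 ≠ 0 := by
    intro h0
    obtain ⟨k, hk⟩ := Polynomial.dvd_iff_isRoot.mpr (show q.IsRoot 0 from h0)
    have h2 : (X - C (0:ℝ))^2 ∣ X * q.comp (-(X^2)) := by
      rw [hk, Polynomial.mul_comp, Polynomial.sub_comp, Polynomial.X_comp, Polynomial.C_comp, Polynomial.C_0]
      exact ⟨-(X * k.comp (-(X^2))), by ring⟩
    have hm := (Polynomial.le_rootMultiplicity_iff hQ0).mpr h2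
    have := hsimpQ 0
    omega
  have hrealP' : ∀ w : ℂ, Polynomial.aeval (-(w^2)) p = 0 → w.im = 0 := by
    intro w hw
    apply hrealP w
    rw [Polynomial.aeval_comp]
    simpa using hw
  have hrealQ' : ∀ w : ℂ, Polynomial.aeval (-(w^2)) q = 0 → w.im = 0 := by
    intro w hw
    apply hrealQ w
    rw [map_mul, Polynomial.aeval_comp]
    have h1 : (Polynomial.aeval w) (-(X^2) : Polynomial ℝ) = -(w^2) := by simp
    rw [h1, hw, mul_zero]
  have hnegrealp := Stmt6Aux.roots_neg p hp00 hrealP'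
  have hnegrealq := Stmt6Aux.roots_neg q hq00 hrealQ'
  have hnegp : ∀ x : ℝ, p.IsRoot x → x < 0 := by
    intro x hx
    obtain ⟨x', hx', he⟩ := hnegrealp (x:ℂ) (by rw [Stmt6Aux.aeval_real]; exact_mod_cast hx)
    have hxx : x = x' := by exact_mod_cast he
    rw [hxx]; exact hx'
  have hnegq : ∀ x : ℝ, q.IsRoot x → x < 0 := by
    intro x hx
    obtain ⟨x', hx', he⟩ := hnegrealq (x:ℂ) (by rw [Stmt6Aux.aeval_real]; exact_mod_cast hx)
    have hxx : x = x' := by exact_mod_cast he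
    rw [hxx]; exact hx'
  have hsimp_p : ∀ x : ℝ, p.rootMultiplicity x ≤ 1 :=
    Stmt6Aux.simple_roots p (p.comp (-(X^2))) hp hP0 dvd_rfl hnegp hsimpP
  have hsimp_q : ∀ x : ℝ, q.rootMultiplicity x ≤ 1 :=
    Stmt6Aux.simple_roots q (X * q.comp (-(X^2))) hq hQ0 (dvd_mul_left _ _) hnegq hsimpQ
  have hUcard := Stmt6Aux.card_roots_toFinset p hp hnegrealp hsimp_p
  have hVcard := Stmt6Aux.card_roots_toFinset q hq hnegrealq hsimp_q
  have hPeven : ∀ t : ℝ, (p.comp (-(X^2))).eval (-t) = (p.comp (-(X^2))).eval t := by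
    intro t; rw [hPeval, hPeval]; ring_nf
  have hQodd : ∀ t : ℝ, (X * q.comp (-(X^2))).eval (-t) = -((X * q.comp (-(X^2))).eval t) := by
    intro t; rw [hQeval, hQeval]; ring_nf
  have hP00' : ¬ (p.comp (-(X^2))).IsRoot 0 := by
    unfold Polynomial.IsRoot
    rw [hPeval]
    simpa using hp00
  have hnocommon := Stmt6Aux.no_common_root (p.comp (-(X^2))) (X * q.comp (-(X^2)))
    hP0 hQ0 hint hPeven hQodd hP00'
  have hfeval : ∀ w : ℂ, Polynomial.aeval w f
      = Polynomial.aeval (w^2) p + w * Polynomial.aeval (w^2) q := by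
    intro w
    rw [hdec, map_add, map_mul, Polynomial.aeval_comp, Polynomial.aeval_comp]
    simp
  rw [hfeval z] at hz
  have hden : ∀ w : ℂ, 0 < w.re → w * Polynomial.aeval (w^2) q ≠ 0 := by
    intro w hw
    apply mul_ne_zero
    · intro h0; rw [h0] at hw; simp at hw
    · intro h0
      obtain ⟨x, hx, hxe⟩ := hnegrealq _ h0
      exact Stmt6Aux.sq_ne_nonpos_real hw hx.le hxe
  have hnum : ∀ w : ℂ, 0 < w.re → Polynomial.aeval (w^2) p ≠ 0 := by
    intro w hw h0
    obtain ⟨x, hx, hxe⟩ := hnegrealp _ h0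
    exact Stmt6Aux.sq_ne_nonpos_real hw hx.le hxe
  rcases lt_trichotomy z.re 0 with hre0 | hre0 | hre0
  · exact hre0
  · -- z purely imaginary : impossible
    exfalso
    have hz2 : z^2 = ((-(z.im^2) : ℝ) : ℂ) := by
      apply Complex.ext
      · rw [pow_two]
        simp only [Complex.mul_re, hre0, Complex.ofReal_re]
        ring
      · rw [pow_two]
        simp only [Complex.mul_im, hre0, Complex.ofReal_im]
        ring
    rw [hz2, Stmt6Aux.aeval_real, Stmt6Aux.aeval_real] at hz
    rw [Complex.ext_iff] at hz
    obtain ⟨h1, h2⟩ := hz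
    simp only [Complex.add_re, Complex.add_im, Complex.mul_re, Complex.mul_im, hre0,
      Complex.ofReal_re, Complex.ofReal_im, Complex.zero_re, Complex.zero_im,
      zero_mul, mul_zero, sub_zero, zero_add, add_zero, zero_sub, neg_zero] at h1 h2
    apply hnocommon z.im
    · unfold Polynomial.IsRoot
      rw [hPeval]
      exact h1
    · unfold Polynomial.IsRoot
      rw [hQeval]
      exact h2
  · -- z in the right half plane : impossible
    exfalso
    have hroot_eq : Polynomial.aeval (z^2) p = -(z * Polynomial.aeval (z^2) q) :=
      eq_neg_of_add_eq_zero_left hz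
    set φ : ℝ → ℂ := fun t => z₀ + (t:ℂ) * (z - z₀) with hφdef
    have hφ0 : φ 0 = z₀ := by simp [hφdef]
    have hφ1 : φ 1 = z := by simp [hφdef]
    have hφre : ∀ t, t ∈ Set.Icc (0:ℝ) 1 → 0 < (φ t).re := by
      intro t ht
      have hre : (φ t).re = z₀.re + t * (z.re - z₀.re) := by
        simp [hφdef, Complex.add_re, Complex.mul_re, Complex.sub_re, Complex.sub_im]
      rw [hre]
      rcases eq_or_lt_of_le ht.1 with h0 | h0
      · rw [← h0]; simpa using hz₀re
      · nlinarith [mul_pos h0 hre0, mul_nonneg (sub_nonneg.mpr ht.2) hz₀re.le]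
    have hφcont : Continuous φ := by
      apply continuous_const.add
      exact (Complex.continuous_ofReal.mul continuous_const)
    set F : ℝ → ℝ := fun t =>
      ((Polynomial.aeval ((φ t)^2) p) / ((φ t) * Polynomial.aeval ((φ t)^2) q)).re with hFdef
    have hFcont : ContinuousOn F (Set.Icc 0 1) := by
      apply Complex.continuous_re.comp_continuousOn
      apply ContinuousOn.div
      · exact ((Polynomial.continuous_aeval p).comp (hφcont.pow 2)).continuousOn
      · exact (hφcont.mul ((Polynomial.continuous_aeval q).comp (hφcont.pow 2))).continuousOn
      · intro t ht; exact hden (φ t) (hφre t ht)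
    have hF0 : 0 < F 0 := by
      have he : F 0 = ((Polynomial.aeval ((φ 0)^2) p)
          / ((φ 0) * Polynomial.aeval ((φ 0)^2) q)).re := rfl
      rw [he, hφ0]
      exact hz₀pos
    have hF1 : F 1 = -1 := by
      have he : F 1 = ((Polynomial.aeval ((φ 1)^2) p)
          / ((φ 1) * Polynomial.aeval ((φ 1)^2) q)).re := rfl
      rw [he, hφ1, hroot_eq, neg_div, div_self (hden z hre0)]
      simp
    have h0mem : (0:ℝ) ∈ Set.Icc (F 1) (F 0) := by
      rw [hF1]; exact ⟨by norm_num, hF0.le⟩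
    obtain ⟨t₀, ht₀mem, ht₀⟩ := intermediate_value_Icc' (by norm_num : (0:ℝ) ≤ 1) hFcont h0mem
    set z₁ := φ t₀ with hz₁def
    have hz₁re : 0 < z₁.re := hφre t₀ ht₀mem
    have hD₁ : z₁ * Polynomial.aeval (z₁^2) q ≠ 0 := hden z₁ hz₁re
    set Fq : ℂ := Polynomial.aeval (z₁^2) p / (z₁ * Polynomial.aeval (z₁^2) q) with hFqdef
    have hFqre : Fq.re = 0 := ht₀
    set t₁ := Fq.im with ht₁def
    have hFqI : Fq = (t₁:ℂ) * Complex.I := by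
      apply Complex.ext
      · simp [hFqre]
      · simp [ht₁def]
    have ht₁0 : t₁ ≠ 0 := by
      intro h0
      have hFq0 : Fq = 0 := by rw [hFqI, h0]; simp
      have : Polynomial.aeval (z₁^2) p = 0 := by
        rw [hFqdef] at hFq0
        exact (div_eq_zero_iff.mp hFq0).resolve_right hD₁
      exact hnum z₁ hz₁re this
    have hnum_eq : Polynomial.aeval (z₁^2) p = Fq * (z₁ * Polynomial.aeval (z₁^2) q) := by
      rw [hFqdef]
      exact (div_mul_cancel₀ _ hD₁).symm
    have hspos : 0 < t₁^2 := lt_of_le_of_ne (sq_nonneg _) (Ne.symm (pow_ne_zero 2 ht₁0))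
    have hG : Polynomial.aeval (z₁^2) (p^2 + C (t₁^2) * (X * q^2)) = 0 := by
      simp only [map_add, map_mul, map_pow, Polynomial.aeval_C, Polynomial.aeval_X]
      rw [hnum_eq, hFqI]
      have hI : ((t₁:ℂ) * Complex.I)^2 = -((t₁:ℂ)^2) := by
        rw [mul_pow, Complex.I_sq]; ring
      rw [mul_pow, hI]
      rw [show ((algebraMap ℝ ℂ) t₁ : ℂ) = (t₁:ℂ) from rfl]
      ring
    obtain ⟨x, hx, hxe⟩ := Stmt6Aux.G_roots_neg p q (t₁^2) hspos hp hq hp00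
      hnegrealp hnegrealq hUcard hVcard hint hnocommon (z₁^2) hG
    exact Stmt6Aux.sq_ne_nonpos_real hz₁re hx.le hxe
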